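/- In Kretschmer's setting with α > 0, let 0 ≤ δ ≤ γ < 1 and b := χ_{[0,δ] ∪ [γ,1]}. Then val(P_b) = α and the primal problem (P_b) has an optimal solution (namely (x, r) = (0, 1)); val(D_b) = min{1, α} and the dual problem (D_b) has an optimal solution; moreover val(P_b) = val(D_b) if and only if α ≤ 1, if and only if ∂v(b) ≠ ∅. -/

import Mathlib

open MeasureTheory

/-- Lebesgue measure on `[0,1]`. -/
noncomputable def mu : Measure ℝ := volume.restrict (Set.Icc (0 : ℝ) 1)

lemma mu_ne_top (s : Set ℝ) : mu s ≠ ⊤ := by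
  have h1 : mu s ≤ mu Set.univ := measure_mono (Set.subset_univ s)
  have h2 : mu Set.univ = ENNReal.ofReal 1 := by
    simp [mu, Measure.restrict_apply_univ, Real.volume_Icc]
  exact ne_top_of_le_ne_top (by simp [h2]) h1

/-- Feasibility of `(x, r)` for the primal problem with right-hand side `y`. -/
def Feas (y : ℝ → ℝ) (p : (ℝ → ℝ) × ℝ) : Prop :=
  MemLp p.1 2 mu ∧ (∀ᵐ t ∂mu, 0 ≤ p.1 t) ∧ 0 ≤ p.2 ∧
  ∀ᵐ t ∂mu, y t ≤ (∫ s in Set.Ioc t 1, p.1 s ∂mu) + p.2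

/-- The cost `c*(x,r) = ∫_0^1 t x(t) dt + α r`. -/
noncomputable def cost (α : ℝ) (p : (ℝ → ℝ) × ℝ) : ℝ :=
  (∫ t, t * p.1 t ∂mu) + α * p.2

/-- Kretschmer's value function on `Y = L²[0,1]`. -/
noncomputable def val (α : ℝ) (y : Lp ℝ 2 mu) : EReal :=
  ⨅ (p : (ℝ → ℝ) × ℝ) (_ : Feas (⇑y) p), ((cost α p : ℝ) : EReal)

/-- Dual feasibility: `z ∈ L²₊`, `∫_0^t z ≤ t` a.e. and `∫_0^1 z ≤ α`. -/
def DFeas (α : ℝ) (z : ℝ → ℝ) : Prop :=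
  MemLp z 2 mu ∧ (∀ᵐ t ∂mu, 0 ≤ z t) ∧
  (∀ᵐ t ∂mu, (∫ s in Set.Ioc 0 t, z s ∂mu) ≤ t) ∧ (∫ t, z t ∂mu) ≤ α

/-- The value of the dual problem with right-hand side `b`. -/
noncomputable def valD (α : ℝ) (b : ℝ → ℝ) : EReal :=
  ⨆ (z : ℝ → ℝ) (_ : DFeas α z), ((∫ t, b t * z t ∂mu : ℝ) : EReal)

/-- The subdifferential of the value function at `b ∈ L²`, with `(L²)* ≅ L²`. -/
noncomputable def subdiffL2 (α : ℝ) (b : Lp ℝ 2 mu) : Set (Lp ℝ 2 mu) :=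
  {z | ∃ r : ℝ, val α b = (r : EReal) ∧
    ∀ y : Lp ℝ 2 mu, (((inner ℝ (y - b) z : ℝ) + r : ℝ) : EReal) ≤ val α y}

/-- The indicator function of a measurable set `s ⊆ ℝ` as an element of `L²[0,1]`. -/
noncomputable def chiLp (s : Set ℝ) (hs : MeasurableSet s) : Lp ℝ 2 mu :=
  indicatorConstLp 2 hs (mu_ne_top s) (1 : ℝ)

open Filter Set Topology

instance : IsFiniteMeasure mu := by
  constructor
  exact lt_top_iff_ne_top.2 (mu_ne_top Set.univ)

lemma mu_restrict (s : Set ℝ) (hs : MeasurableSet s) :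
    mu.restrict s = volume.restrict (s ∩ Set.Icc 0 1) := by
  rw [mu, Measure.restrict_restrict hs]

lemma mu_Ioc {a b : ℝ} (ha : 0 ≤ a) (hb : b ≤ 1) :
    mu (Set.Ioc a b) = ENNReal.ofReal (b - a) := by
  rw [mu, Measure.restrict_apply measurableSet_Ioc,
    Set.inter_eq_self_of_subset_left (fun t ht => Set.mem_Icc.2
      ⟨ha.trans (Set.mem_Ioc.1 ht).1.le, (Set.mem_Ioc.1 ht).2.trans hb⟩),
    Real.volume_Ioc]

lemma mu_Ioc_toReal {a b : ℝ} (ha : 0 ≤ a) (hb : b ≤ 1) (hab : a ≤ b) :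
    (mu (Set.Ioc a b)).toReal = b - a := by
  rw [mu_Ioc ha hb, ENNReal.toReal_ofReal (by linarith)]

lemma ae_mem_Icc : ∀ᵐ t ∂mu, t ∈ Set.Icc (0:ℝ) 1 := by
  rw [mu]; exact ae_restrict_mem measurableSet_Icc

/-- restriction of `mu` to `Iio s` agrees with restriction to `Ioc 0 s` for `s ≤ 1`. -/
lemma mu_restrict_Iio {s : ℝ} (hs : s ≤ 1) :
    mu.restrict (Set.Iio s) = mu.restrict (Set.Ioc 0 s) := by
  rw [mu_restrict _ measurableSet_Iio, mu_restrict _ measurableSet_Ioc]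
  have h1 : Set.Iio s ∩ Set.Icc 0 1 = Set.Ico 0 s := by
    ext t; simp only [Set.mem_inter_iff, Set.mem_Iio, Set.mem_Icc, Set.mem_Ico]
    constructor
    · rintro ⟨h, h0, _⟩; exact ⟨h0, h⟩
    · rintro ⟨h0, h⟩; exact ⟨h, h0, by linarith⟩
  have h2 : Set.Ioc 0 s ∩ Set.Icc 0 1 = Set.Ioc 0 s := by
    apply Set.inter_eq_self_of_subset_left
    exact fun t ht => Set.mem_Icc.2 ⟨(Set.mem_Ioc.1 ht).1.le, (Set.mem_Ioc.1 ht).2.trans hs⟩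
  rw [h1, h2]
  exact Measure.restrict_congr_set Ico_ae_eq_Ioc

/-- The tail integrals of `|f|` near 1 tend to zero. -/
lemma tail_tendsto {f : ℝ → ℝ} (hf : Integrable f mu) :
    Tendsto (fun n : ℕ => ∫ s in Set.Ioc (1 - 1/(n+1) : ℝ) 1, |f s| ∂mu) atTop (𝓝 0) := by
  have hanti : Antitone (fun n : ℕ => Set.Ioc (1 - 1/(n+1) : ℝ) 1) := by
    intro n m hnm
    apply Set.Ioc_subset_Ioc_left
    have h1 : (1:ℝ)/(m+1) ≤ 1/(n+1) := by
      apply div_le_div_of_nonneg_left one_pos.le (by positivity)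
      exact_mod_cast by omega
    linarith
  have h := tendsto_setIntegral_of_antitone (μ := mu) (f := fun s => |f s|)
    (fun n => measurableSet_Ioc) hanti ⟨0, hf.abs.integrableOn⟩
  have hiempty : mu (⋂ n : ℕ, Set.Ioc (1 - 1/(n+1) : ℝ) 1) = 0 := by
    have hsub : (⋂ n : ℕ, Set.Ioc (1 - 1/(n+1) : ℝ) 1) ⊆ {1} := by
      intro x hx
      simp only [Set.mem_iInter, Set.mem_Ioc] at hx
      have hx1 : x ≤ 1 := (hx 0).2
      have hx2 : 1 ≤ x := by
        by_contra hc
        push_neg at hc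
        obtain ⟨n, hn⟩ := exists_nat_one_div_lt (by linarith : 0 < 1 - x)
        have := (hx n).1
        linarith [hn]
      simp [le_antisymm hx1 hx2]
    refine measure_mono_null hsub ?_
    rw [mu, Measure.restrict_apply (MeasurableSet.singleton 1)]
    exact measure_mono_null Set.inter_subset_left Real.volume_singleton
  have hz : ∫ s in (⋂ n : ℕ, Set.Ioc (1 - 1/(n+1) : ℝ) 1), |f s| ∂mu = 0 := by
    rw [MeasureTheory.Measure.restrict_eq_zero.2 hiempty, integral_zero_measure]
  rwa [hz] at h

/-- Existence of points near 1 in any conull set. -/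
lemma exists_near_one {S : Set ℝ} (hS : ∀ᵐ t ∂mu, t ∈ S) {a : ℝ} (ha0 : 0 ≤ a) (ha : a < 1)
    (n : ℕ) : ∃ t, t ∈ S ∧ max a (1 - 1/(n+1)) < t ∧ t < 1 := by
  set u : ℝ := max a (1 - 1/(n+1)) with hu
  have hu0 : 0 ≤ u := le_trans ha0 (le_max_left _ _)
  have hu1 : u < 1 := by
    apply max_lt ha
    have : (0:ℝ) < 1/(n+1) := by positivity
    linarith
  by_contra hc
  push_neg at hc
  have hsub : Set.Ioo u 1 ⊆ Sᶜ := by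
    intro t ht hmem
    exact absurd (hc t hmem ht.1) (not_le.2 ht.2)
  have h0 : mu (Set.Ioo u 1) = 0 := by
    apply measure_mono_null hsub
    have := ae_iff.1 hS
    simpa [Set.compl_def] using this
  have : mu (Set.Ioo u 1) = ENNReal.ofReal (1 - u) := by
    rw [mu, Measure.restrict_apply measurableSet_Ioo,
      Set.inter_eq_self_of_subset_left (fun t ht => Set.mem_Icc.2
        ⟨hu0.trans (Set.mem_Ioo.1 ht).1.le, (Set.mem_Ioo.1 ht).2.le⟩),
      Real.volume_Ioo]
  rw [this] at h0
  simp only [ENNReal.ofReal_eq_zero] at h0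
  linarith

lemma cost_nonneg {α : ℝ} (hα : 0 ≤ α) {y : ℝ → ℝ} {p : (ℝ → ℝ) × ℝ} (hp : Feas y p) :
    0 ≤ cost α p := by
  obtain ⟨hx2, hx0, hr0, hcon⟩ := hp
  have h1 : 0 ≤ ∫ t, t * p.1 t ∂mu := by
    apply integral_nonneg_of_ae
    filter_upwards [ae_mem_Icc, hx0] with t ht hx
    exact mul_nonneg ht.1 hx
  have h2 : 0 ≤ α * p.2 := mul_nonneg hα hr0
  unfold cost; linarith

lemma primal_lb {α γ κ : ℝ} (hα : 0 < α) (hγ0 : 0 ≤ γ) (hγ : γ < 1) (hκ : 0 ≤ κ)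
    {y : ℝ → ℝ} (hy : ∀ᵐ t ∂mu, t ∈ Set.Ioo γ 1 → κ ≤ y t)
    {p : (ℝ → ℝ) × ℝ} (hp : Feas y p) : α * κ ≤ cost α p := by
  obtain ⟨hx2, hx0, hr0, hcon⟩ := hp
  have hxint : Integrable p.1 mu := hx2.integrable one_le_two
  have hrκ : κ ≤ p.2 := by
    have htail := tail_tendsto hxint
    have htend : Tendsto (fun n : ℕ =>
        κ - ∫ s in Set.Ioc (1 - 1/(n+1) : ℝ) 1, |p.1 s| ∂mu) atTop (𝓝 (κ - 0)) :=
      Tendsto.sub tendsto_const_nhds htail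
    rw [sub_zero] at htend
    apply le_of_tendsto htend
    apply Eventually.of_forall
    intro n
    have hae : ∀ᵐ t ∂mu, t ∈ {t | (t ∈ Set.Ioo γ 1 → κ ≤ y t) ∧
        y t ≤ (∫ s in Set.Ioc t 1, p.1 s ∂mu) + p.2} := by
      filter_upwards [hy, hcon] with t h1 h2; exact ⟨h1, h2⟩
    obtain ⟨t, ht, htlo, hthi⟩ := exists_near_one hae hγ0 hγ n
    obtain ⟨ht1, ht2⟩ := ht
    have htγ : t ∈ Set.Ioo γ 1 := ⟨lt_of_le_of_lt (le_max_left _ _) htlo, hthi⟩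
    have hint : ∫ s in Set.Ioc t 1, p.1 s ∂mu
        ≤ ∫ s in Set.Ioc (1 - 1/(n+1) : ℝ) 1, |p.1 s| ∂mu := by
      calc ∫ s in Set.Ioc t 1, p.1 s ∂mu ≤ ∫ s in Set.Ioc t 1, |p.1 s| ∂mu :=
            integral_mono_ae hxint.integrableOn hxint.abs.integrableOn
              (ae_restrict_of_ae (Eventually.of_forall fun s => le_abs_self _))
        _ ≤ ∫ s in Set.Ioc (1 - 1/(n+1) : ℝ) 1, |p.1 s| ∂mu := by
            apply setIntegral_mono_set hxint.abs.integrableOn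
              (ae_restrict_of_ae (Eventually.of_forall fun s => abs_nonneg _))
            exact HasSubset.Subset.eventuallyLE (Set.Ioc_subset_Ioc_left
              (le_of_lt (lt_of_le_of_lt (le_max_right _ _) htlo)))
    have := ht1 htγ
    linarith
  have h1 : 0 ≤ ∫ t, t * p.1 t ∂mu := by
    apply integral_nonneg_of_ae
    filter_upwards [ae_mem_Icc, hx0] with t ht hx
    exact mul_nonneg ht.1 hx
  have h2 : α * κ ≤ α * p.2 := mul_le_mul_of_nonneg_left hrκ hα.le
  unfold cost; linarith

/-- The explicit dual solution. -/
noncomputable def zfun (d γ c : ℝ) : ℝ → ℝ := fun t =>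
  (Set.Ioc 0 d).indicator (fun _ => 1) t + (Set.Ioc γ 1).indicator (fun _ => c) t

lemma zfun_measurable (d γ c : ℝ) : Measurable (zfun d γ c) :=
  ((measurable_const.indicator measurableSet_Ioc).add
    (measurable_const.indicator measurableSet_Ioc))

lemma zfun_memℒp (d γ c : ℝ) : MemLp (zfun d γ c) 2 mu :=
  ((memLp_indicator_const (μ := mu) 2 (measurableSet_Ioc (a := (0:ℝ)) (b := d)) (1:ℝ)
    (Or.inr (mu_ne_top _))).add
    (memLp_indicator_const (μ := mu) 2 (measurableSet_Ioc (a := γ) (b := (1:ℝ))) c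
    (Or.inr (mu_ne_top _))))

lemma zfun_nonneg {d γ c : ℝ} (hc : 0 ≤ c) (t : ℝ) : 0 ≤ zfun d γ c t := by
  unfold zfun
  have h1 : (0:ℝ) ≤ (Set.Ioc 0 d).indicator (fun _ => (1:ℝ)) t :=
    Set.indicator_nonneg (fun _ _ => zero_le_one) t
  have h2 : (0:ℝ) ≤ (Set.Ioc γ 1).indicator (fun _ => c) t :=
    Set.indicator_nonneg (fun _ _ => hc) t
  linarith

lemma zfun_le {d γ c : ℝ} (hc : 0 ≤ c) (t : ℝ) : zfun d γ c t ≤ 1 + c := by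
  unfold zfun
  have h1 : (Set.Ioc 0 d).indicator (fun _ => (1:ℝ)) t ≤ 1 :=
    Set.indicator_le' (fun _ _ => le_refl 1) (fun _ _ => zero_le_one) t
  have h2 : (Set.Ioc γ 1).indicator (fun _ => c) t ≤ c :=
    Set.indicator_le' (fun _ _ => le_refl c) (fun _ _ => hc) t
  linarith

lemma zfun_setint (d γ c : ℝ) {A : Set ℝ} (hA : MeasurableSet A) :
    ∫ t in A, zfun d γ c t ∂mu
      = (mu (Set.Ioc 0 d ∩ A)).toReal + c * (mu (Set.Ioc γ 1 ∩ A)).toReal := by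
  unfold zfun
  rw [integral_add ((integrable_const (1:ℝ)).indicator measurableSet_Ioc)
    ((integrable_const c).indicator measurableSet_Ioc)]
  rw [integral_indicator_const (1:ℝ) measurableSet_Ioc,
    integral_indicator_const c measurableSet_Ioc,
    measureReal_restrict_apply measurableSet_Ioc, measureReal_restrict_apply measurableSet_Ioc]
  simp [mul_comm, measureReal_def]

lemma zfun_int {d γ c : ℝ} (hd0 : 0 ≤ d) (hd1 : d ≤ 1) (hγ0 : 0 ≤ γ) (hγ1 : γ ≤ 1) :
    ∫ t, zfun d γ c t ∂mu = d + c * (1 - γ) := by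
  have h := zfun_setint d γ c MeasurableSet.univ
  rw [Measure.restrict_univ] at h
  rw [h, Set.inter_univ, Set.inter_univ, mu_Ioc_toReal le_rfl hd1 hd0,
    mu_Ioc_toReal hγ0 le_rfl hγ1]
  ring

lemma zfun_F {d γ c : ℝ} (hd0 : 0 ≤ d) (hdγ : d ≤ γ) (hγ1 : γ ≤ 1) {t : ℝ}
    (ht0 : 0 ≤ t) (ht1 : t ≤ 1) :
    ∫ s in Set.Ioc 0 t, zfun d γ c s ∂mu = min d t + c * (mu (Set.Ioc γ t)).toReal := by
  rw [zfun_setint d γ c measurableSet_Ioc, Set.Ioc_inter_Ioc, Set.Ioc_inter_Ioc]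
  have h1 : max (0:ℝ) 0 = 0 := by simp
  have h2 : max γ 0 = γ := max_eq_left (hd0.trans hdγ)
  have h3 : min (1:ℝ) t = t := min_eq_right ht1
  rw [h1, h2, h3, mu_Ioc_toReal le_rfl (le_trans (min_le_right _ _) ht1)
    (le_min (hd0) ht0 |>.trans (le_refl _)), sub_zero]

lemma zfun_constraint {m d γ c : ℝ} (hd0 : 0 ≤ d) (hdγ : d ≤ γ) (hγ1 : γ < 1)
    (hdm : d ≤ m) (hm1 : m ≤ 1) (hc : c = (m - d)/(1-γ)) {t : ℝ}
    (ht0 : 0 ≤ t) (ht1 : t ≤ 1) :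
    ∫ s in Set.Ioc 0 t, zfun d γ c s ∂mu ≤ t := by
  rw [zfun_F hd0 hdγ hγ1.le ht0 ht1]
  have h1γ : (0:ℝ) < 1 - γ := by linarith
  have hcc : c * (1-γ) = m - d := by rw [hc]; field_simp
  rcases le_or_gt t γ with h | h
  · rw [Set.Ioc_eq_empty (not_lt.2 h), measure_empty, ENNReal.toReal_zero, mul_zero, add_zero]
    exact min_le_right _ _
  · rw [mu_Ioc_toReal (hd0.trans hdγ) ht1 h.le, min_eq_left (by linarith : d ≤ t)]
    have key : (t - d) * (1 - γ) - (m - d) * (t - γ)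
        = (1 - t) * (γ - d) + (t - γ) * (1 - m) := by ring
    have h2 : (c * (t - γ)) * (1 - γ) ≤ (t - d) * (1 - γ) := by
      have : (c * (t - γ)) * (1 - γ) = (m - d) * (t - γ) := by
        rw [mul_comm c (t-γ), mul_assoc, hcc]; ring
      rw [this]
      nlinarith [mul_nonneg (by linarith : (0:ℝ) ≤ 1 - t) (by linarith : (0:ℝ) ≤ γ - d),
        mul_nonneg (by linarith : (0:ℝ) ≤ t - γ) (by linarith : (0:ℝ) ≤ 1 - m)]
    have h3 : c * (t - γ) ≤ t - d := le_of_mul_le_mul_right (by linarith) h1γ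
    linarith

lemma dual_ub {α : ℝ} {S : Set ℝ} (hS : MeasurableSet S) {z : ℝ → ℝ} (hz : DFeas α z) :
    ∫ t, S.indicator 1 t * z t ∂mu ≤ min 1 α := by
  obtain ⟨hz2, hz0, hzF, hzα⟩ := hz
  have hzint : Integrable z mu := hz2.integrable one_le_two
  have hbz : (fun t => S.indicator 1 t * z t) = S.indicator z := by
    funext t; by_cases h : t ∈ S <;>
      simp [Set.indicator_of_mem, Set.indicator_of_notMem, h]
  have hbzint : Integrable (fun t => S.indicator 1 t * z t) mu := by
    rw [hbz]; exact hzint.indicator hS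
  have hle : ∫ t, S.indicator 1 t * z t ∂mu ≤ ∫ t, z t ∂mu := by
    apply integral_mono_ae hbzint hzint
    filter_upwards [hz0] with t ht
    by_cases h : t ∈ S <;>
      simp [Set.indicator_of_mem, Set.indicator_of_notMem, h, ht]
  have hz1 : ∫ t, z t ∂mu ≤ 1 := by
    have hwhole : ∫ t, z t ∂mu = ∫ t in Set.Ioc (0:ℝ) 1, z t ∂mu := by
      have hrw : mu.restrict (Set.Ioc (0:ℝ) 1) = mu := by
        rw [mu_restrict _ measurableSet_Ioc, Set.inter_eq_self_of_subset_left
          (fun t ht => Set.mem_Icc.2 ⟨(Set.mem_Ioc.1 ht).1.le, (Set.mem_Ioc.1 ht).2⟩)]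
        rw [mu]
        exact Measure.restrict_congr_set Ioc_ae_eq_Icc
      rw [hrw]
    have htail := tail_tendsto hzint
    have htend : Tendsto (fun n : ℕ =>
        (1:ℝ) + ∫ s in Set.Ioc (1 - 1/(n+1) : ℝ) 1, |z s| ∂mu) atTop (𝓝 (1 + 0)) :=
      Tendsto.add tendsto_const_nhds htail
    rw [add_zero] at htend
    apply ge_of_tendsto htend
    apply Eventually.of_forall
    intro n
    obtain ⟨t, htF, htlo, hthi⟩ := exists_near_one hzF le_rfl zero_lt_one n
    have ht0 : (0:ℝ) < t := lt_of_le_of_lt (le_max_left _ _) htlo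
    have hsplit : ∫ s in Set.Ioc (0:ℝ) 1, z s ∂mu
        = (∫ s in Set.Ioc 0 t, z s ∂mu) + ∫ s in Set.Ioc t 1, z s ∂mu := by
      rw [← Set.Ioc_union_Ioc_eq_Ioc ht0.le hthi.le]
      exact setIntegral_union (Set.Ioc_disjoint_Ioc_of_le le_rfl) measurableSet_Ioc
        hzint.integrableOn hzint.integrableOn
    have htail2 : ∫ s in Set.Ioc t 1, z s ∂mu
        ≤ ∫ s in Set.Ioc (1 - 1/(n+1) : ℝ) 1, |z s| ∂mu := by
      calc ∫ s in Set.Ioc t 1, z s ∂mu ≤ ∫ s in Set.Ioc t 1, |z s| ∂mu :=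
            integral_mono_ae hzint.integrableOn hzint.abs.integrableOn
              (ae_restrict_of_ae (Eventually.of_forall fun s => le_abs_self _))
        _ ≤ _ := by
            apply setIntegral_mono_set hzint.abs.integrableOn
              (ae_restrict_of_ae (Eventually.of_forall fun s => abs_nonneg _))
            exact HasSubset.Subset.eventuallyLE (Set.Ioc_subset_Ioc_left
              (le_of_lt (lt_of_le_of_lt (le_max_right _ _) htlo)))
    rw [hwhole, hsplit]
    have : ∫ s in Set.Ioc 0 t, z s ∂mu ≤ t := htF
    have ht1 : t ≤ 1 := hthi.le
    linarith
  exact le_min (hle.trans hz1) (hle.trans hzα)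

lemma weak_duality {α : ℝ} {z : ℝ → ℝ} (hzm : Measurable z) {C : ℝ}
    (hz0 : ∀ t, 0 ≤ z t) (hzC : ∀ t, z t ≤ C)
    (hF : ∀ᵐ s ∂mu, (∫ u in Set.Ioc 0 s, z u ∂mu) ≤ s)
    (hzα : ∫ t, z t ∂mu ≤ α)
    {y : ℝ → ℝ} (hy : Integrable y mu)
    {p : (ℝ → ℝ) × ℝ} (hp : Feas y p) :
    ∫ t, y t * z t ∂mu ≤ cost α p := by
  obtain ⟨hx2, hx0, hr0, hcon⟩ := hp
  have hxint : Integrable p.1 mu := hx2.integrable one_le_two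
  have hzint : Integrable z mu := by
    refine (integrable_const C).mono' hzm.aestronglyMeasurable ?_
    exact Eventually.of_forall fun t => by
      rw [Real.norm_eq_abs, abs_of_nonneg (hz0 t)]; exact hzC t
  have hC0 : 0 ≤ C := (hz0 0).trans (hzC 0)
  -- measurable representative of x
  set x : ℝ → ℝ := hx2.1.mk p.1 with hxdef
  have hxx : p.1 =ᵐ[mu] x := hx2.1.ae_eq_mk
  have hxm : StronglyMeasurable x := hx2.1.stronglyMeasurable_mk
  have hxint' : Integrable x mu := hxint.congr hxx
  have hx0' : ∀ᵐ t ∂mu, 0 ≤ x t := by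
    filter_upwards [hx0, hxx] with t h1 h2; rwa [h2] at h1
  have hGx : ∀ t : ℝ, ∫ s in Set.Ioc t 1, p.1 s ∂mu = ∫ s in Set.Ioc t 1, x s ∂mu :=
    fun t => integral_congr_ae (ae_restrict_of_ae hxx)
  set G : ℝ → ℝ := fun t => ∫ s in Set.Ioc t 1, x s ∂mu with hGdef
  set M : ℝ := ∫ t, |x t| ∂mu with hMdef
  have hGbd : ∀ t, |G t| ≤ M := by
    intro t
    calc |G t| ≤ ∫ s in Set.Ioc t 1, |x s| ∂mu := by
          rw [← Real.norm_eq_abs]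
          exact (norm_integral_le_integral_norm _).trans (le_of_eq (by simp [Real.norm_eq_abs]))
      _ ≤ M := setIntegral_le_integral hxint'.abs
          (Eventually.of_forall fun s => abs_nonneg _)
  have hGanti : Antitone G := by
    intro t t' htt'
    apply setIntegral_mono_set hxint'.integrableOn
      (ae_restrict_of_ae hx0')
    exact HasSubset.Subset.eventuallyLE (Set.Ioc_subset_Ioc_left htt')
  have hGm : Measurable G := hGanti.measurable
  -- Step 1
  have hyzint : Integrable (fun t => y t * z t) mu := by
    refine hy.bdd_mul (c := C) hzm.aestronglyMeasurable ?_ |>.congr ?_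
    · exact Eventually.of_forall fun t => by
        rw [Real.norm_eq_abs, abs_of_nonneg (hz0 t)]; exact hzC t
    · exact Eventually.of_forall fun t => mul_comm _ _
  have hGrzint : Integrable (fun t => (G t + p.2) * z t) mu := by
    refine hzint.bdd_mul (c := M + |p.2|) (hGm.add_const p.2).aestronglyMeasurable ?_
    exact Eventually.of_forall fun t => by
      rw [Real.norm_eq_abs]
      calc |G t + p.2| ≤ |G t| + |p.2| := abs_add_le _ _
        _ ≤ M + |p.2| := by linarith [hGbd t]
  have hstep1 : ∫ t, y t * z t ∂mu ≤ ∫ t, (G t + p.2) * z t ∂mu := by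
    apply integral_mono_ae hyzint hGrzint
    filter_upwards [hcon] with t ht
    apply mul_le_mul_of_nonneg_right _ (hz0 t)
    have h2 : (∫ s in Set.Ioc t 1, p.1 s ∂mu) = G t := hGx t
    linarith
  -- Step 2
  have hGzint : Integrable (fun t => G t * z t) mu := by
    refine hzint.bdd_mul (c := M) hGm.aestronglyMeasurable ?_
    exact Eventually.of_forall fun t => by rw [Real.norm_eq_abs]; exact hGbd t
  have hstep2 : ∫ t, (G t + p.2) * z t ∂mu
      = (∫ t, G t * z t ∂mu) + p.2 * ∫ t, z t ∂mu := by
    have : (fun t => (G t + p.2) * z t) = fun t => G t * z t + p.2 * z t := by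
      funext t; ring
    rw [this, integral_add hGzint (hzint.const_mul p.2), integral_const_mul]
  -- Step 3 : Fubini
  have hstep3 : ∫ t, G t * z t ∂mu ≤ ∫ s, s * x s ∂mu := by
    set f : ℝ × ℝ → ℝ := fun q => z q.1 * (Set.Ioc q.1 1).indicator x q.2 with hfdef
    have hfeq : f = (Set.indicator {q : ℝ × ℝ | q.1 < q.2 ∧ q.2 ≤ 1}
        (fun q => z q.1 * x q.2)) := by
      funext q
      by_cases h : q.1 < q.2 ∧ q.2 ≤ 1
      · rw [hfdef]
        simp only
        rw [Set.indicator_of_mem (show q ∈ {q : ℝ × ℝ | q.1 < q.2 ∧ q.2 ≤ 1} from h),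
          Set.indicator_of_mem (Set.mem_Ioc.2 h)]
      · rw [hfdef]
        simp only
        rw [Set.indicator_of_notMem
            (show q ∉ {q : ℝ × ℝ | q.1 < q.2 ∧ q.2 ≤ 1} from h),
          Set.indicator_of_notMem (fun hq => h (Set.mem_Ioc.1 hq)), mul_zero]
    have hD : MeasurableSet {q : ℝ × ℝ | q.1 < q.2 ∧ q.2 ≤ 1} :=
      (measurableSet_lt measurable_fst measurable_snd).inter
        (measurableSet_le measurable_snd measurable_const)
    have hfm : Measurable f := by
      rw [hfeq]
      exact ((hzm.comp measurable_fst).mul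
        (hxm.measurable.comp measurable_snd)).indicator hD
    have hfint : Integrable f (mu.prod mu) := by
      refine ((integrable_const C).mul_prod hxint'.norm).mono'
        hfm.aestronglyMeasurable ?_
      apply Eventually.of_forall
      rintro ⟨t, s⟩
      simp only [hfdef, Real.norm_eq_abs, abs_mul]
      calc |z t| * |(Set.Ioc t 1).indicator x s| ≤ C * |x s| := by
            apply mul_le_mul
            · rw [abs_of_nonneg (hz0 t)]; exact hzC t
            · rw [← Real.norm_eq_abs, ← Real.norm_eq_abs (x s)]
              exact norm_indicator_le_norm_self x s
            · exact abs_nonneg _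
            · exact hC0
        _ ≤ C * ‖x s‖ := le_of_eq (by rw [Real.norm_eq_abs])
    have hswap : ∫ t, ∫ s, f (t, s) ∂mu ∂mu = ∫ s, ∫ t, f (t, s) ∂mu ∂mu := by
      exact integral_integral_swap (by exact hfint)
    have hleft : ∫ t, G t * z t ∂mu = ∫ t, ∫ s, f (t, s) ∂mu ∂mu := by
      apply integral_congr_ae
      apply Eventually.of_forall
      intro t
      rw [hfdef]
      simp only
      rw [integral_const_mul, hGdef]
      simp only
      rw [integral_indicator measurableSet_Ioc]
      ring
    -- inner integral computation
    have hinner : ∀ᵐ s ∂mu, ∫ t, f (t, s) ∂mu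
        = (∫ u in Set.Ioc 0 s, z u ∂mu) * x s := by
      filter_upwards [ae_mem_Icc] with s hs
      have hs1 : s ≤ 1 := hs.2
      have h1 : (fun t => f (t, s)) = fun t => (Set.Iio s).indicator (fun u => z u * x s) t := by
        funext t
        rw [hfdef]
        simp only
        by_cases h : t < s
        · rw [Set.indicator_of_mem (Set.mem_Iio.2 h),
            Set.indicator_of_mem (Set.mem_Ioc.2 ⟨h, hs1⟩)]
        · rw [Set.indicator_of_notMem (fun hq => h (Set.mem_Iio.1 hq)),
            Set.indicator_of_notMem (fun hq => h (Set.mem_Ioc.1 hq).1), mul_zero]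
      rw [h1, integral_indicator measurableSet_Iio, mu_restrict_Iio hs1,
        integral_mul_const]
    have hright : ∫ s, ∫ t, f (t, s) ∂mu ∂mu ≤ ∫ s, s * x s ∂mu := by
      have hlint : Integrable (fun s => ∫ t, f (t, s) ∂mu) mu := by
        have := hfint.integral_prod_right
        exact this
      have hrint : Integrable (fun s => s * x s) mu := by
        refine hxint'.bdd_mul (c := 1) measurable_id.aestronglyMeasurable ?_
        filter_upwards [ae_mem_Icc] with s hs
        rw [Real.norm_eq_abs, abs_of_nonneg hs.1]; exact hs.2
      apply integral_mono_ae hlint hrint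
      filter_upwards [hinner, hF, hx0'] with s h1 h2 h3
      rw [h1]
      exact mul_le_mul_of_nonneg_right h2 h3
    have hfinal : ∫ s, s * x s ∂mu = ∫ s, s * p.1 s ∂mu := by
      apply integral_congr_ae
      filter_upwards [hxx] with s h
      rw [h]
    calc ∫ t, G t * z t ∂mu = ∫ t, ∫ s, f (t, s) ∂mu ∂mu := hleft
      _ = ∫ s, ∫ t, f (t, s) ∂mu ∂mu := hswap
      _ ≤ ∫ s, s * x s ∂mu := hright
  have hfinal2 : ∫ s, s * x s ∂mu = ∫ s, s * p.1 s ∂mu := by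
    apply integral_congr_ae
    filter_upwards [hxx] with s h
    rw [h]
  have hlast : p.2 * ∫ t, z t ∂mu ≤ α * p.2 := by
    rw [mul_comm α p.2]
    exact mul_le_mul_of_nonneg_left hzα hr0
  unfold cost
  rw [hfinal2] at hstep3
  linarith

lemma L2_inner_eq (f g : Lp ℝ 2 mu) : (inner ℝ f g : ℝ) = ∫ t, f t * g t ∂mu := by
  rw [MeasureTheory.L2.inner_def]
  apply integral_congr_ae
  apply Eventually.of_forall
  intro t
  simp [RCLike.inner_apply, starRingEnd_apply, star_trivial, mul_comm]

lemma val_le {α : ℝ} (y : Lp ℝ 2 mu) {p : (ℝ → ℝ) × ℝ} (hp : Feas (⇑y) p) :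
    val α y ≤ ((cost α p : ℝ) : EReal) :=
  iInf₂_le p hp

lemma val_ge {α : ℝ} (y : Lp ℝ 2 mu) (c : ℝ) (h : ∀ p, Feas (⇑y) p → c ≤ cost α p) :
    ((c : ℝ) : EReal) ≤ val α y :=
  le_iInf fun p => le_iInf fun hp => EReal.coe_le_coe_iff.2 (h p hp)

lemma feas01 {y : Lp ℝ 2 mu} (h : ∀ᵐ t ∂mu, ⇑y t ≤ 1) : Feas (⇑y) ((fun _ => 0), 1) := by
  refine ⟨?_, Eventually.of_forall fun t => le_refl 0, zero_le_one, ?_⟩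
  · simpa using memLp_const (0:ℝ) (μ := mu) (p := 2)
  · filter_upwards [h] with t ht
    simpa using ht

lemma cost01 (α : ℝ) : cost α ((fun _ => 0), 1) = α := by
  unfold cost; simp

lemma val_zero {α : ℝ} (hα : 0 < α) : val α (0 : Lp ℝ 2 mu) = (0 : EReal) := by
  apply le_antisymm
  · have hf : Feas (⇑(0 : Lp ℝ 2 mu)) ((fun _ => 0), 0) := by
      refine ⟨?_, Eventually.of_forall fun t => le_refl 0, le_refl 0, ?_⟩
      · simpa using memLp_const (0:ℝ) (μ := mu) (p := 2)
      · filter_upwards [Lp.coeFn_zero ℝ 2 mu] with t ht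
        simp only [Pi.zero_apply] at ht
        simp only [integral_zero, add_zero]
        exact le_of_eq ht
    have := val_le (α := α) 0 hf
    have hc : cost α ((fun _ => 0), 0) = 0 := by unfold cost; simp
    rwa [hc] at this
  · exact val_ge _ 0 fun p hp => cost_nonneg hα.le hp

/-- In Kretschmer's setting with `α > 0`, for `0 ≤ δ ≤ γ < 1` and
`b := χ_{[0,δ] ∪ [γ,1]}`: `val(P_b) = α` with optimal solution `(0,1)`;
`val(D_b) = min{1,α}` and `(D_b)` has an optimal solution; and
`val(P_b) = val(D_b)` iff `α ≤ 1` iff `∂v(b) ≠ ∅`. -/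
theorem stmt17 (α δ γ : ℝ) (hα : 0 < α) (hδ : 0 ≤ δ) (hδγ : δ ≤ γ) (hγ : γ < 1) :
    val α (chiLp (Set.Icc 0 δ ∪ Set.Icc γ 1)
        ((measurableSet_Icc).union measurableSet_Icc)) = ((α : ℝ) : EReal) ∧
    (Feas (⇑(chiLp (Set.Icc 0 δ ∪ Set.Icc γ 1)
        ((measurableSet_Icc).union measurableSet_Icc))) ((fun _ => 0), 1) ∧
      ((cost α ((fun _ => 0), 1) : ℝ) : EReal) =
        val α (chiLp (Set.Icc 0 δ ∪ Set.Icc γ 1)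
          ((measurableSet_Icc).union measurableSet_Icc))) ∧
    valD α ((Set.Icc 0 δ ∪ Set.Icc γ 1).indicator 1) = ((min 1 α : ℝ) : EReal) ∧
    (∃ z : ℝ → ℝ, DFeas α z ∧
      ((∫ t, (Set.Icc 0 δ ∪ Set.Icc γ 1).indicator 1 t * z t ∂mu : ℝ) : EReal) =
        valD α ((Set.Icc 0 δ ∪ Set.Icc γ 1).indicator 1)) ∧
    ((val α (chiLp (Set.Icc 0 δ ∪ Set.Icc γ 1)
        ((measurableSet_Icc).union measurableSet_Icc)) =
      valD α ((Set.Icc 0 δ ∪ Set.Icc γ 1).indicator 1)) ↔ α ≤ 1) ∧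
    ((val α (chiLp (Set.Icc 0 δ ∪ Set.Icc γ 1)
        ((measurableSet_Icc).union measurableSet_Icc)) =
      valD α ((Set.Icc 0 δ ∪ Set.Icc γ 1).indicator 1)) ↔
      (subdiffL2 α (chiLp (Set.Icc 0 δ ∪ Set.Icc γ 1)
        ((measurableSet_Icc).union measurableSet_Icc))).Nonempty) := by
  have hγ0 : 0 ≤ γ := hδ.trans hδγ
  set S : Set ℝ := Set.Icc 0 δ ∪ Set.Icc γ 1 with hSdef
  have hS : MeasurableSet S := (measurableSet_Icc).union measurableSet_Icc
  set b : Lp ℝ 2 mu := chiLp S hS with hbdef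
  have hbcoe : ⇑b =ᵐ[mu] S.indicator (1 : ℝ → ℝ) := indicatorConstLp_coeFn
  have hbf_le : ∀ t, S.indicator (1 : ℝ → ℝ) t ≤ 1 :=
    fun t => Set.indicator_le' (fun _ _ => le_refl 1) (fun _ _ => zero_le_one) t
  have hbf_nonneg : ∀ t, 0 ≤ S.indicator (1 : ℝ → ℝ) t :=
    fun t => Set.indicator_nonneg (fun _ _ => zero_le_one) t
  have hble : ∀ᵐ t ∂mu, ⇑b t ≤ 1 := by
    filter_upwards [hbcoe] with t ht; rw [ht]; exact hbf_le t
  -- Part 1 : val = α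
  have hfeas01 : Feas (⇑b) ((fun _ => 0), 1) := feas01 hble
  have hval : val α b = ((α : ℝ) : EReal) := by
    apply le_antisymm
    · have := val_le (α := α) b hfeas01
      rwa [cost01] at this
    · apply val_ge
      intro p hp
      have hyb : ∀ᵐ t ∂mu, t ∈ Set.Ioo γ 1 → (1:ℝ) ≤ ⇑b t := by
        filter_upwards [hbcoe] with t ht hmem
        rw [ht, Set.indicator_of_mem (Set.mem_union_right _
          (Set.mem_Icc.2 ⟨hmem.1.le, hmem.2.le⟩))]
        exact le_refl 1
      have := primal_lb hα hγ0 hγ zero_le_one hyb hp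
      rwa [mul_one] at this
  -- the dual optimal solution
  set m : ℝ := min 1 α with hmdef
  have hm0 : 0 < m := lt_min one_pos hα
  have hm1 : m ≤ 1 := min_le_left _ _
  have hmα : m ≤ α := min_le_right _ _
  set d : ℝ := min δ m with hddef
  have hd0 : 0 ≤ d := le_min hδ hm0.le
  have hdδ : d ≤ δ := min_le_left _ _
  have hdm : d ≤ m := min_le_right _ _
  have hdγ : d ≤ γ := hdδ.trans hδγ
  have h1γ : (0:ℝ) < 1 - γ := by linarith
  set c : ℝ := (m - d)/(1-γ) with hcdef
  have hc0 : 0 ≤ c := div_nonneg (by linarith) h1γ.le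
  have hcc : c * (1-γ) = m - d := by rw [hcdef]; field_simp
  set zs : ℝ → ℝ := zfun d γ c with hzsdef
  have hzs_int : ∫ t, zs t ∂mu = m := by
    rw [hzsdef, zfun_int hd0 (by linarith) hγ0 hγ.le]
    linarith
  have hzsF : ∀ᵐ t ∂mu, (∫ s in Set.Ioc 0 t, zs s ∂mu) ≤ t := by
    filter_upwards [ae_mem_Icc] with t ht
    exact zfun_constraint hd0 hdγ hγ hdm hm1 hcdef ht.1 ht.2
  have hzDF : DFeas α zs := by
    refine ⟨zfun_memℒp d γ c, Eventually.of_forall (zfun_nonneg hc0), hzsF, ?_⟩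
    rw [hzs_int]; exact hmα
  have hbz_eq : (fun t => S.indicator (1 : ℝ → ℝ) t * zs t) = zs := by
    funext t
    by_cases h : t ∈ S
    · rw [Set.indicator_of_mem h]; simp
    · rw [Set.indicator_of_notMem h, zero_mul]
      have h1 : t ∉ Set.Ioc 0 d := fun hc =>
        h (Set.mem_union_left _ (Set.mem_Icc.2 ⟨hc.1.le, hc.2.trans hdδ⟩))
      have h2 : t ∉ Set.Ioc γ 1 := fun hc =>
        h (Set.mem_union_right _ (Set.mem_Icc.2 ⟨hc.1.le, hc.2⟩))
      rw [hzsdef]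
      unfold zfun
      rw [Set.indicator_of_notMem h1, Set.indicator_of_notMem h2, add_zero]
  have hint_bz : ∫ t, S.indicator (1 : ℝ → ℝ) t * zs t ∂mu = m := by
    rw [hbz_eq, hzs_int]
  -- Part 3 : valD = min 1 α
  have hvalD : valD α (S.indicator 1) = ((m : ℝ) : EReal) := by
    apply le_antisymm
    · exact iSup₂_le fun z hz => EReal.coe_le_coe_iff.2 (dual_ub hS hz)
    · exact le_iSup₂_of_le zs hzDF (le_of_eq (by rw [hint_bz]))
  refine ⟨hval, ⟨hfeas01, by rw [cost01, hval]⟩, hvalD, ⟨zs, hzDF, by rw [hint_bz, hvalD]⟩, ?_, ?_⟩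
  · rw [hval, hvalD]
    constructor
    · intro h
      have : α = m := EReal.coe_eq_coe_iff.1 h
      rw [this]; exact hm1
    · intro h
      have : m = α := min_eq_right h
      rw [this]
  · rw [hval, hvalD]
    have key : α ≤ 1 ↔ (subdiffL2 α b).Nonempty := by
      constructor
      · -- forward: construct subgradient
        intro hα1
        have hmeq : m = α := min_eq_right hα1
        set zLp : Lp ℝ 2 mu := (zfun_memℒp d γ c).toLp zs with hzLpdef
        have hzLpcoe : ⇑zLp =ᵐ[mu] zs := MemLp.coeFn_toLp _
        refine ⟨zLp, α, hval, ?_⟩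
        intro y
        apply le_iInf
        intro p
        apply le_iInf
        intro hp
        apply EReal.coe_le_coe_iff.2
        have hyint : Integrable (⇑y) mu := (Lp.memLp y).integrable one_le_two
        have hyzint : Integrable (fun t => ⇑y t * zs t) mu := by
          refine (hyint.bdd_mul (c := 1 + c)
            ((zfun_measurable d γ c).aestronglyMeasurable) ?_).congr ?_
          · exact Eventually.of_forall fun t => by
              rw [Real.norm_eq_abs, abs_of_nonneg (zfun_nonneg hc0 t)]
              exact zfun_le hc0 t
          · exact Eventually.of_forall fun t => mul_comm _ _
        have hbzint : Integrable (fun t => S.indicator (1 : ℝ → ℝ) t * zs t) mu := by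
          rw [hbz_eq]
          exact (zfun_memℒp d γ c).integrable one_le_two
        have hinner : (inner ℝ (y - b) zLp : ℝ) = (∫ t, ⇑y t * zs t ∂mu) - m := by
          rw [L2_inner_eq]
          have heq1 : ∫ t, ⇑(y - b) t * ⇑zLp t ∂mu
              = ∫ t, (⇑y t - S.indicator (1 : ℝ → ℝ) t) * zs t ∂mu := by
            apply integral_congr_ae
            filter_upwards [Lp.coeFn_sub y b, hbcoe, hzLpcoe] with t h1 h2 h3
            rw [h1, h3, Pi.sub_apply, h2]
          have heq2 : (fun t => (⇑y t - S.indicator (1 : ℝ → ℝ) t) * zs t)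
              = fun t => ⇑y t * zs t - S.indicator (1 : ℝ → ℝ) t * zs t := by
            funext t; ring
          rw [heq1, heq2, integral_sub hyzint hbzint, hint_bz]
        rw [hinner, hmeq]
        have hwd : ∫ t, ⇑y t * zs t ∂mu ≤ cost α p := by
          apply weak_duality (zfun_measurable d γ c) (zfun_nonneg hc0) (zfun_le hc0)
            hzsF ?_ hyint hp
          rw [hzs_int]; exact hmα
        linarith
      · -- backward: subgradient forces α ≤ 1
        rintro ⟨z, r, hvr, hineq⟩
        have hrα : r = α := EReal.coe_eq_coe_iff.1 (hvr.symm.trans hval)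
        rw [hrα] at hineq
        have hzint : Integrable (⇑z) mu := (Lp.memLp z).integrable one_le_two
        have hzsm : StronglyMeasurable (⇑z) := Lp.stronglyMeasurable z
        -- Step B1 : z ≥ 0 a.e.
        have hz0ae : ∀ᵐ t ∂mu, 0 ≤ ⇑z t := by
          set N : Set ℝ := {t | ⇑z t < 0} with hNdef
          have hN : MeasurableSet N := measurableSet_lt hzsm.measurable measurable_const
          set w : Lp ℝ 2 mu := indicatorConstLp 2 hN (mu_ne_top N) (1:ℝ) with hwdef
          have hwcoe : ⇑w =ᵐ[mu] N.indicator (fun _ => (1:ℝ)) := indicatorConstLp_coeFn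
          have hfw : Feas (⇑(b - w)) ((fun _ => 0), 1) := by
            apply feas01
            filter_upwards [Lp.coeFn_sub b w, hbcoe, hwcoe] with t h1 h2 h3
            rw [h1, Pi.sub_apply, h2, h3]
            have hw0 : 0 ≤ N.indicator (fun _ => (1:ℝ)) t :=
              Set.indicator_nonneg (fun _ _ => zero_le_one) t
            linarith [hbf_le t]
          have hvbw : val α (b - w) ≤ ((α:ℝ):EReal) := by
            have := val_le (α := α) (b - w) hfw
            rwa [cost01] at this
          have h1 := (hineq (b - w)).trans hvbw
          have h2 : (inner ℝ (b - w - b) z : ℝ) + α ≤ α := EReal.coe_le_coe_iff.1 h1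
          have h3 : b - w - b = -w := by abel
          rw [h3, inner_neg_left] at h2
          have h4 : 0 ≤ (inner ℝ w z : ℝ) := by
            have : -(inner ℝ w z : ℝ) ≤ 0 := by linarith
            linarith
          have hinnw : (inner ℝ w z : ℝ) = ∫ t in N, ⇑z t ∂mu := by
            rw [L2_inner_eq, ← integral_indicator hN]
            apply integral_congr_ae
            filter_upwards [hwcoe] with t h
            rw [h]
            by_cases hm : t ∈ N
            · rw [Set.indicator_of_mem hm, Set.indicator_of_mem hm, one_mul]
            · rw [Set.indicator_of_notMem hm, Set.indicator_of_notMem hm, zero_mul]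
          have hNz : mu N = 0 := by
            have hg0 : 0 ≤ᵐ[mu.restrict N] fun t => -⇑z t := by
              filter_upwards [ae_restrict_mem hN] with t ht
              have h5 : ⇑z t < 0 := ht
              simp only [Pi.zero_apply]
              linarith
            have hgint : Integrable (fun t => -⇑z t) (mu.restrict N) :=
              (hzint.restrict (s := N)).neg
            have hnpos : ¬ (0 < ∫ t in N, -⇑z t ∂mu) := by
              rw [integral_neg]
              rw [hinnw] at h4
              linarith
            rw [integral_pos_iff_support_of_nonneg_ae hg0 hgint] at hnpos
            have hsupp : MeasurableSet (Function.support fun t => -⇑z t) := by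
              have : (Function.support fun t => -⇑z t) = (fun t => -⇑z t) ⁻¹' ({0}ᶜ) := by
                ext t; simp [Function.mem_support]
              rw [this]
              exact hzsm.measurable.neg (measurableSet_singleton 0).compl
            have hzero : mu.restrict N (Function.support fun t => -⇑z t) = 0 :=
              le_zero_iff.1 (not_lt.1 hnpos)
            rw [Measure.restrict_apply hsupp] at hzero
            have hNsub : N ⊆ (Function.support fun t => -⇑z t) := by
              intro t ht
              have : ⇑z t < 0 := ht
              simp only [Function.mem_support]
              intro hc
              have : ⇑z t = 0 := by linarith [neg_eq_zero.1 hc]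
              linarith
            rwa [Set.inter_eq_self_of_subset_right hNsub] at hzero
          rw [ae_iff]
          have : {t | ¬ 0 ≤ ⇑z t} = N := by
            ext t; simp [hNdef, not_le]
          rw [this]
          exact hNz
        -- Step B2 : α ≤ ∫ b z
        have hIb : (inner ℝ b z : ℝ) = ∫ t, S.indicator (1:ℝ→ℝ) t * ⇑z t ∂mu := by
          rw [L2_inner_eq]
          apply integral_congr_ae
          filter_upwards [hbcoe] with t h
          rw [h]
        have hαI : α ≤ ∫ t, S.indicator (1:ℝ→ℝ) t * ⇑z t ∂mu := by
          have h1 : (((inner ℝ ((0 : Lp ℝ 2 mu) - b) z : ℝ) + α : ℝ) : EReal) ≤ ((0:ℝ):EReal) := by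
            rw [EReal.coe_zero]
            exact (hineq 0).trans_eq (val_zero hα)
          have h2 := EReal.coe_le_coe_iff.1 h1
          rw [zero_sub, inner_neg_left] at h2
          rw [← hIb]
          have : -(inner ℝ b z : ℝ) + α ≤ 0 := h2
          linarith
        have hbz_int : Integrable (fun t => S.indicator (1:ℝ→ℝ) t * ⇑z t) mu := by
          have heq : (fun t => S.indicator (1:ℝ→ℝ) t * ⇑z t) = S.indicator ⇑z := by
            funext t
            by_cases h : t ∈ S
            · rw [Set.indicator_of_mem h, Set.indicator_of_mem h]; simp
            · rw [Set.indicator_of_notMem h, Set.indicator_of_notMem h, zero_mul]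
          rw [heq]
          exact hzint.indicator hS
        -- Step B3 : for each n, α ≤ 1 + tail n
        have hbound : ∀ n : ℕ, α ≤ 1 + ∫ s in Set.Ioc (1 - 1/(n+1) : ℝ) 1, |⇑z s| ∂mu := by
          intro n
          set ε : ℝ := 1/(n+1) with hεdef
          have hε0 : 0 < ε := by positivity
          have hε1 : ε ≤ 1 := by
            rw [hεdef, div_le_one (by positivity)]
            linarith [Nat.cast_nonneg (α := ℝ) n]
          set xe : ℝ → ℝ := (Set.Ioc (1-ε) 1).indicator (fun _ => 1/ε) with hxedef
          have hxe_nonneg : ∀ t, 0 ≤ xe t :=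
            fun t => Set.indicator_nonneg (fun _ _ => by positivity) t
          have hxeint : Integrable xe mu := (integrable_const _).indicator measurableSet_Ioc
          set ye : ℝ → ℝ := fun t => ∫ s in Set.Ioc t 1, xe s ∂mu with hyedef
          have hye_eq : ∀ t, ye t = (1/ε) * (mu (Set.Ioc (max (1-ε) t) 1)).toReal := by
            intro t
            rw [hyedef]
            simp only
            rw [hxedef, integral_indicator_const _ measurableSet_Ioc,
              measureReal_restrict_apply measurableSet_Ioc, Set.Ioc_inter_Ioc, min_self]
            simp [mul_comm, measureReal_def]
          have hμIoc : ∀ t, (mu (Set.Ioc (max (1-ε) t) 1)).toReal ≤ ε := by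
            intro t
            rcases le_or_gt (max (1-ε) t) 1 with h | h
            · rw [mu_Ioc_toReal (le_trans (by linarith) (le_max_left _ _)) le_rfl h]
              have := le_max_left (1-ε) t
              linarith
            · rw [Set.Ioc_eq_empty (not_lt.2 h.le)]
              simp [hε0.le]
          have hye_nonneg : ∀ t, 0 ≤ ye t := by
            intro t
            rw [hye_eq]
            positivity
          have hye_le1 : ∀ t, ye t ≤ 1 := by
            intro t
            rw [hye_eq]
            calc (1/ε) * (mu (Set.Ioc (max (1-ε) t) 1)).toReal ≤ (1/ε) * ε :=
                  mul_le_mul_of_nonneg_left (hμIoc t) (by positivity)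
              _ = 1 := by field_simp
          have hye_one : ∀ t, t ≤ 1 - ε → ye t = 1 := by
            intro t ht
            rw [hye_eq, max_eq_left ht, mu_Ioc_toReal (by linarith) le_rfl (by linarith)]
            field_simp
            ring
          have hye_anti : Antitone ye := by
            intro t t' h
            apply setIntegral_mono_set hxeint.integrableOn
              (ae_restrict_of_ae (Eventually.of_forall hxe_nonneg))
            exact HasSubset.Subset.eventuallyLE (Set.Ioc_subset_Ioc_left h)
          have hyeM : MemLp ye 2 mu := by
            apply MemLp.of_bound hye_anti.measurable.aestronglyMeasurable 1
            apply Eventually.of_forall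
            intro t
            rw [Real.norm_eq_abs, abs_of_nonneg (hye_nonneg t)]
            exact hye_le1 t
          set Ye : Lp ℝ 2 mu := hyeM.toLp ye with hYedef
          have hYecoe : ⇑Ye =ᵐ[mu] ye := MemLp.coeFn_toLp _
          have hfeasYe : Feas (⇑(b + Ye)) (xe, 1) := by
            refine ⟨memLp_indicator_const 2 measurableSet_Ioc _ (Or.inr (mu_ne_top _)),
              Eventually.of_forall hxe_nonneg, zero_le_one, ?_⟩
            filter_upwards [Lp.coeFn_add b Ye, hbcoe, hYecoe] with t h1 h2 h3
            rw [h1, Pi.add_apply, h2, h3]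
            have hyeval : ∫ s in Set.Ioc t 1, xe s ∂mu = ye t := rfl
            rw [hyeval]
            linarith [hbf_le t]
          have hcostYe : cost α (xe, 1) ≤ 1 + α := by
            unfold cost
            simp only [mul_one]
            have h1 : ∫ t, t * xe t ∂mu ≤ ∫ t, xe t ∂mu := by
              have hid_int : Integrable (fun t => t * xe t) mu := by
                refine hxeint.bdd_mul (c := 1) measurable_id.aestronglyMeasurable ?_
                filter_upwards [ae_mem_Icc] with t ht
                rw [Real.norm_eq_abs, abs_of_nonneg ht.1]
                exact ht.2
              apply integral_mono_ae hid_int hxeint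
              filter_upwards [ae_mem_Icc] with t ht
              calc t * xe t ≤ 1 * xe t := mul_le_mul_of_nonneg_right ht.2 (hxe_nonneg t)
                _ = xe t := one_mul _
            have h2 : ∫ t, xe t ∂mu = 1 := by
              rw [hxedef, integral_indicator_const _ measurableSet_Ioc, measureReal_def,
                mu_Ioc_toReal (by linarith) le_rfl (by linarith)]
              simp only [smul_eq_mul]
              have : (1:ℝ) - (1-ε) = ε := by ring
              rw [this]
              field_simp
            linarith
          have hvYe : val α (b + Ye) ≤ ((cost α (xe,1) : ℝ) : EReal) := val_le _ hfeasYe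
          have h1 := (hineq (b + Ye)).trans hvYe
          have h2 : (inner ℝ (b + Ye - b) z : ℝ) + α ≤ cost α (xe, 1) :=
            EReal.coe_le_coe_iff.1 h1
          have h3 : b + Ye - b = Ye := by abel
          rw [h3] at h2
          have hinnYe : (inner ℝ Ye z : ℝ) = ∫ t, ye t * ⇑z t ∂mu := by
            rw [L2_inner_eq]
            apply integral_congr_ae
            filter_upwards [hYecoe] with t h
            rw [h]
          have hyez : ∫ t, ye t * ⇑z t ∂mu ≤ 1 := by
            rw [← hinnYe]
            linarith
          have hindz_eq : (fun t => (Set.Ioc (1-ε) 1).indicator (fun _ => (1:ℝ)) t * ⇑z t)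
              = (Set.Ioc (1-ε) 1).indicator ⇑z := by
            funext t
            by_cases h : t ∈ Set.Ioc (1-ε) 1
            · rw [Set.indicator_of_mem h, Set.indicator_of_mem h, one_mul]
            · rw [Set.indicator_of_notMem h, Set.indicator_of_notMem h, zero_mul]
          have hyez_int : Integrable (fun t => ye t * ⇑z t) mu := by
            refine hzint.bdd_mul (c := 1) hye_anti.measurable.aestronglyMeasurable ?_
            exact Eventually.of_forall fun t => by
              rw [Real.norm_eq_abs, abs_of_nonneg (hye_nonneg t)]
              exact hye_le1 t
          have hindz_int : Integrable
              (fun t => (Set.Ioc (1-ε) 1).indicator (fun _ => (1:ℝ)) t * ⇑z t) mu := by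
            rw [hindz_eq]
            exact hzint.indicator measurableSet_Ioc
          have hcomp : ∫ t, S.indicator (1:ℝ→ℝ) t * ⇑z t ∂mu
              ≤ (∫ t, ye t * ⇑z t ∂mu)
                + ∫ t, (Set.Ioc (1-ε) 1).indicator (fun _ => (1:ℝ)) t * ⇑z t ∂mu := by
            rw [← integral_add hyez_int hindz_int]
            apply integral_mono_ae hbz_int (hyez_int.add hindz_int)
            filter_upwards [ae_mem_Icc, hz0ae] with t ht hz0t
            have hkey : S.indicator (1:ℝ→ℝ) t
                ≤ ye t + (Set.Ioc (1-ε) 1).indicator (fun _ => (1:ℝ)) t := by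
              by_cases h : t ∈ Set.Ioc (1-ε) 1
              · rw [Set.indicator_of_mem h]
                linarith [hbf_le t, hye_nonneg t]
              · rw [Set.indicator_of_notMem h]
                have ht' : t ≤ 1 - ε := by
                  rcases not_and_or.1 h with h' | h'
                  · push_neg at h'
                    linarith
                  · exact absurd ht.2 h'
                rw [hye_one t ht', add_zero]
                exact hbf_le t
            calc S.indicator (1:ℝ→ℝ) t * ⇑z t
                ≤ (ye t + (Set.Ioc (1-ε) 1).indicator (fun _ => (1:ℝ)) t) * ⇑z t :=
                  mul_le_mul_of_nonneg_right hkey hz0t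
              _ = ye t * ⇑z t + (Set.Ioc (1-ε) 1).indicator (fun _ => (1:ℝ)) t * ⇑z t := by
                  ring
          have htail_le : ∫ t, (Set.Ioc (1-ε) 1).indicator (fun _ => (1:ℝ)) t * ⇑z t ∂mu
              ≤ ∫ s in Set.Ioc (1-ε) 1, |⇑z s| ∂mu := by
            rw [hindz_eq, integral_indicator measurableSet_Ioc]
            exact integral_mono_ae hzint.integrableOn hzint.abs.integrableOn
              (ae_restrict_of_ae (Eventually.of_forall fun s => le_abs_self _))
          calc α ≤ ∫ t, S.indicator (1:ℝ→ℝ) t * ⇑z t ∂mu := hαI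
            _ ≤ (∫ t, ye t * ⇑z t ∂mu)
                + ∫ t, (Set.Ioc (1-ε) 1).indicator (fun _ => (1:ℝ)) t * ⇑z t ∂mu := hcomp
            _ ≤ 1 + ∫ s in Set.Ioc (1-ε) 1, |⇑z s| ∂mu := by linarith [hyez, htail_le]
        have htail := tail_tendsto hzint
        have htend : Tendsto (fun n : ℕ =>
            (1:ℝ) + ∫ s in Set.Ioc (1 - 1/(n+1) : ℝ) 1, |⇑z s| ∂mu) atTop (𝓝 (1 + 0)) :=
          Tendsto.add tendsto_const_nhds htail
        rw [add_zero] at htend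
        exact ge_of_tendsto htend (Eventually.of_forall hbound)
    constructor
    · intro h
      have hαm : α = m := EReal.coe_eq_coe_iff.1 h
      exact key.1 (hαm ▸ hm1)
    · intro h
      have hα1 : α ≤ 1 := key.2 h
      have : m = α := min_eq_right hα1
      rw [this]
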